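/- The Gamma map is multiplicative: if p(q) and r(q) are palindromic polynomials (of total degrees d and e respectively) with gamma expansions p = Σ γ_j q^j(1+q)^{d-2j} and r = Σ δ_j q^j(1+q)^{e-2j}, then Γ(pr) = Γ(p)Γ(r), where Γ(p) = Σ γ_j s^{d-2j}(-t)^j. -/

import Mathlib

open Finset Polynomial

/-- Double sum over a rectangle equals sum over antidiagonals, given vanishing. -/
lemma sum_rect_eq_sum_antidiagonal {R : Type*} [AddCommMonoid R] (d e : ℕ) (g : ℕ → ℕ → R)
    (h1 : ∀ i k, d < i → g i k = 0) (h2 : ∀ i k, e < k → g i k = 0) :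
    (∑ i ∈ range (d+1), ∑ k ∈ range (e+1), g i k)
      = ∑ j ∈ range (d+e+1), ∑ p ∈ antidiagonal j, g p.1 p.2 := by
  have hU : (∑ i ∈ range (d+1), ∑ k ∈ range (e+1), g i k)
      = ∑ p ∈ range (d+e+1) ×ˢ range (d+e+1), g p.1 p.2 := by
    rw [← Finset.sum_product']
    apply Finset.sum_subset
    · intro p hp
      simp only [mem_product, mem_range] at hp ⊢
      omega
    · intro p hp hnp
      simp only [mem_product, mem_range] at hp hnp
      rcases not_and_or.mp hnp with h | h
      · exact h1 p.1 p.2 (by omega)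
      · exact h2 p.1 p.2 (by omega)
  rw [hU]
  have hdisj : (↑(range (d+e+1)) : Set ℕ).PairwiseDisjoint Finset.HasAntidiagonal.antidiagonal := by
    intro a _ b _ hab
    simp only [Function.onFun, Finset.disjoint_left]
    intro p hpa hpb
    rw [Finset.HasAntidiagonal.mem_antidiagonal] at hpa hpb
    exact hab (hpa ▸ hpb ▸ rfl)
  rw [← Finset.sum_biUnion hdisj]
  symm
  apply Finset.sum_subset
  · intro p hp
    simp only [mem_biUnion, mem_range, Finset.HasAntidiagonal.mem_antidiagonal] at hp
    obtain ⟨j, hj, hpj⟩ := hp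
    simp only [mem_product, mem_range]
    omega
  · intro p hp hnp
    simp only [mem_biUnion, mem_range, Finset.HasAntidiagonal.mem_antidiagonal] at hnp
    push_neg at hnp
    by_cases hle : p.1 + p.2 ≤ d + e
    · exact absurd rfl (hnp (p.1 + p.2) (by omega))
    · rcases (by omega : d < p.1 ∨ e < p.2) with h | h
      · exact h1 p.1 p.2 h
      · exact h2 p.1 p.2 h

/-- Generic convolution lemma. -/
lemma conv_sum {R : Type*} [CommRing R] (d e : ℕ) (γ δ : ℕ → R) (u v w : ℕ → R)
    (hγ : ∀ i, d < 2*i → γ i = 0) (hδ : ∀ k, e < 2*k → δ k = 0)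
    (huv : ∀ i k, 2*i ≤ d → 2*k ≤ e → u i * v k = w (i+k)) :
    (∑ i ∈ range (d+1), γ i * u i) * (∑ k ∈ range (e+1), δ k * v k)
      = ∑ j ∈ range (d+e+1), (∑ p ∈ antidiagonal j, γ p.1 * δ p.2) * w j := by
  rw [Finset.sum_mul_sum]
  have key : (∑ i ∈ range (d+1), ∑ k ∈ range (e+1), γ i * u i * (δ k * v k))
      = ∑ i ∈ range (d+1), ∑ k ∈ range (e+1), γ i * δ k * w (i+k) := by
    apply Finset.sum_congr rfl; intro i _
    apply Finset.sum_congr rfl; intro k _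
    by_cases hi : 2*i ≤ d
    · by_cases hk : 2*k ≤ e
      · rw [← huv i k hi hk]; ring
      · rw [hδ k (by omega)]; ring
    · rw [hγ i (by omega)]; ring
  rw [key, sum_rect_eq_sum_antidiagonal d e (fun i k => γ i * δ k * w (i+k))
    (fun i k hi => by show γ i * δ k * w (i+k) = 0; rw [hγ i (by omega)]; ring)
    (fun i k hk => by show γ i * δ k * w (i+k) = 0; rw [hδ k (by omega)]; ring)]
  apply Finset.sum_congr rfl; intro j _
  rw [Finset.sum_mul]
  apply Finset.sum_congr rfl; intro p hp
  rw [Finset.HasAntidiagonal.mem_antidiagonal] at hp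
  rw [hp]

/-- Linear independence of the gamma basis. -/
lemma gamma_indep (n : ℕ) (c : ℕ → ℂ) (hc : ∀ j, n < 2*j → c j = 0)
    (h : ∑ j ∈ range (n+1), Polynomial.C (c j) * X^j * (1+X)^(n-2*j) = 0) :
    ∀ j, c j = 0 := by
  intro j
  induction j using Nat.strong_induction_on with
  | _ j ih =>
    by_cases hj : n < 2*j
    · exact hc j hj
    push_neg at hj
    have hco := congrArg (fun p => Polynomial.coeff p j) h
    simp only [Polynomial.finset_sum_coeff, Polynomial.coeff_zero] at hco
    have hterm : ∀ i ∈ range (n+1),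
        (Polynomial.C (c i) * X^i * (1+X)^(n-2*i)).coeff j
          = if i ≤ j then c i * ((n-2*i).choose (j-i)) else 0 := by
      intro i _
      rw [mul_comm (Polynomial.C (c i) * X^i), ← mul_assoc, mul_comm _ (Polynomial.C (c i)),
        mul_assoc, Polynomial.coeff_C_mul, Polynomial.coeff_mul_X_pow']
      split_ifs with hij
      · rw [Polynomial.coeff_one_add_X_pow]
      · ring
    rw [Finset.sum_congr rfl hterm] at hco
    rw [Finset.sum_eq_single_of_mem j (by simp; omega)] at hco
    · simpa using hco
    · intro i _ hij
      rcases lt_or_gt_of_ne hij with hlt | hgt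
      · by_cases h2i : n < 2*i
        · simp [hc i h2i]
        · simp [ih i hlt]
      · rw [if_neg (by omega)]

theorem gamma_map_multiplicative (d e : ℕ) (γ δ ε : ℕ → ℂ)
    (hγ : ∀ j, d < 2 * j → γ j = 0) (hδ : ∀ j, e < 2 * j → δ j = 0)
    (hε : ∀ j, d + e < 2 * j → ε j = 0)
    (hprod : (∑ j ∈ Finset.range (d + e + 1),
        Polynomial.C (ε j) * Polynomial.X ^ j * (1 + Polynomial.X) ^ (d + e - 2 * j)) =
      (∑ j ∈ Finset.range (d + 1),
        Polynomial.C (γ j) * Polynomial.X ^ j * (1 + Polynomial.X) ^ (d - 2 * j)) *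
      (∑ j ∈ Finset.range (e + 1),
        Polynomial.C (δ j) * Polynomial.X ^ j * (1 + Polynomial.X) ^ (e - 2 * j))) :
    (∑ j ∈ Finset.range (d + e + 1), MvPolynomial.C (ε j) *
        MvPolynomial.X 0 ^ (d + e - 2 * j) * (-MvPolynomial.X 1) ^ j :
          MvPolynomial (Fin 2) ℂ) =
    (∑ j ∈ Finset.range (d + 1), MvPolynomial.C (γ j) *
        MvPolynomial.X 0 ^ (d - 2 * j) * (-MvPolynomial.X 1) ^ j) *
    (∑ j ∈ Finset.range (e + 1), MvPolynomial.C (δ j) *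
        MvPolynomial.X 0 ^ (e - 2 * j) * (-MvPolynomial.X 1) ^ j) := by
  set b : ℕ → ℂ := fun j => ∑ p ∈ antidiagonal j, γ p.1 * δ p.2 with hb
  have hb0 : ∀ j, d + e < 2*j → b j = 0 := by
    intro j hj
    apply Finset.sum_eq_zero
    intro p hp
    rw [Finset.HasAntidiagonal.mem_antidiagonal] at hp
    rcases (by omega : d < 2*p.1 ∨ e < 2*p.2) with h | h
    · rw [hγ p.1 h, zero_mul]
    · rw [hδ p.2 h, mul_zero]
  -- Step 1: rewrite RHS of hprod as gamma expansion with coefficients b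
  have hprod' : (∑ j ∈ range (d + e + 1),
      Polynomial.C (ε j) * Polynomial.X ^ j * (1 + Polynomial.X) ^ (d + e - 2 * j)) =
      ∑ j ∈ range (d + e + 1),
        Polynomial.C (b j) * Polynomial.X ^ j * (1 + Polynomial.X) ^ (d + e - 2 * j) := by
    rw [hprod]
    have := conv_sum d e (fun i => Polynomial.C (γ i)) (fun k => Polynomial.C (δ k))
      (fun i => Polynomial.X ^ i * (1+Polynomial.X)^(d-2*i))
      (fun k => Polynomial.X ^ k * (1+Polynomial.X)^(e-2*k))
      (fun j => Polynomial.X ^ j * (1+Polynomial.X)^(d+e-2*j))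
      (fun i hi => by show Polynomial.C (γ i) = 0; rw [hγ i hi, map_zero])
      (fun k hk => by show Polynomial.C (δ k) = 0; rw [hδ k hk, map_zero])
      (fun i k hi hk => by
        show _ = _
        rw [mul_mul_mul_comm, ← pow_add, ← pow_add]
        congr 2 <;> omega)
    simp only [← mul_assoc] at this
    rw [this]
    apply Finset.sum_congr rfl; intro j _
    have : Polynomial.C (b j) = ∑ p ∈ antidiagonal j, Polynomial.C (γ p.1) * Polynomial.C (δ p.2) := by
      rw [hb]; simp [map_sum]
    rw [this]
  -- Step 2: deduce ε = b
  have hεb : ∀ j, ε j = b j := by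
    have hzero : ∑ j ∈ range (d+e+1),
        Polynomial.C (ε j - b j) * Polynomial.X^j * (1+Polynomial.X)^(d+e-2*j) = 0 := by
      have := sub_eq_zero.mpr hprod'
      rw [← Finset.sum_sub_distrib] at this
      rw [← this]
      apply Finset.sum_congr rfl; intro j _
      rw [map_sub]; ring
    have := gamma_indep (d+e) (fun j => ε j - b j)
      (fun j hj => by show ε j - b j = 0; rw [hε j hj, hb0 j hj, sub_zero]) hzero
    intro j
    have := this j
    linear_combination this
  -- Step 3: conclude in MvPolynomial
  have final := conv_sum d e (fun i => MvPolynomial.C (γ i)) (fun k => MvPolynomial.C (δ k))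
    (fun i => MvPolynomial.X 0 ^ (d-2*i) * (-MvPolynomial.X 1)^i)
    (fun k => MvPolynomial.X 0 ^ (e-2*k) * (-MvPolynomial.X 1)^k)
    (fun j => (MvPolynomial.X 0 ^ (d+e-2*j) * (-MvPolynomial.X 1)^j : MvPolynomial (Fin 2) ℂ))
    (fun i hi => by show MvPolynomial.C (γ i) = 0; rw [hγ i hi, map_zero])
    (fun k hk => by show MvPolynomial.C (δ k) = 0; rw [hδ k hk, map_zero])
    (fun i k hi hk => by
      show _ = _
      rw [mul_mul_mul_comm, ← pow_add, ← pow_add]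
      congr 2 <;> omega)
  simp only [← mul_assoc] at final
  rw [final]
  apply Finset.sum_congr rfl; intro j _
  have hC : (MvPolynomial.C (b j) : MvPolynomial (Fin 2) ℂ)
      = ∑ p ∈ antidiagonal j, MvPolynomial.C (γ p.1) * MvPolynomial.C (δ p.2) := by
    rw [hb]; simp [map_sum]
  rw [hεb j, hC]
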